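/- (Pinsker/Kullback inequality) For probability measures μ, ν on a countable state space, 2·d_TV(μ,ν)² ≤ d_I(μ,ν), where d_I is the relative entropy (Kullback–Leibler divergence). -/

import Mathlib

/-- Tangent-line bound for the convex function behind the log-sum inequality. -/
private lemma pinsker_pt_ineq {a b t : ℝ} (ha : 0 ≤ a) (hb : 0 ≤ b) (ht : 0 < t)
    (hab : b = 0 → a = 0) :
    a * Real.log t + (a - b * t) ≤ a * Real.log (a / b) := by
  rcases ha.eq_or_lt with h | h
  · rw [← h]
    have : 0 ≤ b * t := mul_nonneg hb ht.le
    simp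
    linarith
  · have hb' : 0 < b := by
      rcases hb.eq_or_lt with h0 | h0
      · exact absurd (hab h0.symm) (by linarith)
      · exact h0
    have hkey := Real.log_le_sub_one_of_pos (show (0:ℝ) < b * t / a by positivity)
    rw [Real.log_div (by positivity) h.ne', Real.log_mul hb'.ne' ht.ne'] at hkey
    rw [Real.log_div h.ne' hb'.ne']
    have h2 := mul_le_mul_of_nonneg_left hkey h.le
    have h3 : a * (b * t / a - 1) = b * t - a := by field_simp
    rw [h3, mul_sub, mul_add] at h2
    rw [mul_sub]
    linarith

/-- Log-sum inequality over a subset (indicator form). -/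
private lemma pinsker_log_sum {Ω : Type*} (μ ν : Ω → ℝ) (hμ0 : ∀ i, 0 ≤ μ i)
    (hν0 : ∀ i, 0 ≤ ν i) (hμs : Summable μ) (hνs : Summable ν)
    (hac : ∀ i, ν i = 0 → μ i = 0)
    (hIsum : Summable fun i => μ i * Real.log (μ i / ν i)) (T : Set Ω) :
    (∑' i, T.indicator μ i) * Real.log ((∑' i, T.indicator μ i) / (∑' i, T.indicator ν i))
      ≤ ∑' i, T.indicator (fun j => μ j * Real.log (μ j / ν j)) i := by
  have hμT := hμs.indicator T
  have hνT := hνs.indicator T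
  have hindμ0 : ∀ i, 0 ≤ T.indicator μ i := fun i => Set.indicator_nonneg (fun j _ => hμ0 j) i
  have hindν0 : ∀ i, 0 ≤ T.indicator ν i := fun i => Set.indicator_nonneg (fun j _ => hν0 j) i
  set a := ∑' i, T.indicator μ i with ha
  set b := ∑' i, T.indicator ν i with hb
  have ha0 : 0 ≤ a := tsum_nonneg hindμ0
  rcases ha0.eq_or_lt with h | h
  · have hz : ∀ i, T.indicator μ i = 0 := fun i =>
      le_antisymm (h ▸ hμT.le_tsum i fun j _ => hindμ0 j) (hindμ0 i)
    have hzf : ∀ i, T.indicator (fun j => μ j * Real.log (μ j / ν j)) i = 0 := by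
      intro i
      by_cases hi : i ∈ T
      · have hμi : μ i = 0 := by have := hz i; rwa [Set.indicator_of_mem hi] at this
        rw [Set.indicator_of_mem hi, hμi, zero_mul]
      · exact Set.indicator_of_notMem hi _
    have h2 : ∑' i, T.indicator (fun j => μ j * Real.log (μ j / ν j)) i = 0 := by
      rw [tsum_congr hzf, tsum_zero]
    rw [h2, ← h, zero_mul]
  · have hbne : b ≠ 0 := by
      intro hb0
      have hzν : ∀ i, T.indicator ν i = 0 := fun i =>
        le_antisymm (hb0 ▸ hνT.le_tsum i fun j _ => hindν0 j) (hindν0 i)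
      have hzμ : ∀ i, T.indicator μ i = 0 := by
        intro i
        by_cases hi : i ∈ T
        · rw [Set.indicator_of_mem hi]
          apply hac
          have := hzν i; rwa [Set.indicator_of_mem hi] at this
        · exact Set.indicator_of_notMem hi _
      have : a = 0 := by rw [ha, tsum_congr hzμ, tsum_zero]
      exact h.ne' this
    have hb0 : 0 < b := (tsum_nonneg hindν0).lt_of_ne (Ne.symm hbne)
    set t := a / b with htdef
    have ht : 0 < t := div_pos h hb0
    have hpt : ∀ i, T.indicator μ i * Real.log t + (T.indicator μ i - T.indicator ν i * t)
        ≤ T.indicator (fun j => μ j * Real.log (μ j / ν j)) i := by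
      intro i
      by_cases hi : i ∈ T
      · simp only [Set.indicator_of_mem hi]
        exact pinsker_pt_ineq (hμ0 i) (hν0 i) ht (hac i)
      · simp [Set.indicator_of_notMem hi]
    have hs1 : Summable (fun i => T.indicator μ i * Real.log t
        + (T.indicator μ i - T.indicator ν i * t)) :=
      (hμT.mul_right _).add (hμT.sub (hνT.mul_right t))
    have hle := Summable.tsum_le_tsum hpt hs1 (hIsum.indicator T)
    have hLHS : ∑' i, (T.indicator μ i * Real.log t + (T.indicator μ i - T.indicator ν i * t))
        = a * Real.log t + (a - b * t) := by
      rw [Summable.tsum_add (hμT.mul_right _) (hμT.sub (hνT.mul_right t)),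
        Summable.tsum_sub hμT (hνT.mul_right t), tsum_mul_right, tsum_mul_right]
    rw [hLHS] at hle
    have hbt : b * t = a := by rw [htdef]; field_simp
    linarith

/-- Two-point Pinsker inequality. -/
private lemma pinsker_two_point {p q : ℝ} (hq0 : 0 ≤ q) (hqp : q ≤ p) (hp1 : p ≤ 1)
    (h0 : q = 0 → p = 0) :
    2 * (p - q) ^ 2 ≤ p * Real.log (p / q) + (1 - p) * Real.log ((1 - p) / (1 - q)) := by
  rcases hqp.eq_or_lt with rfl | hlt
  · have h1 : q * Real.log (q / q) = 0 := by
      rcases eq_or_ne q 0 with rfl | hq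
      · simp
      · rw [div_self hq, Real.log_one, mul_zero]
    have h2 : (1 - q) * Real.log ((1 - q) / (1 - q)) = 0 := by
      rcases eq_or_ne (1 - q) 0 with hq1 | hq1
      · rw [hq1, zero_mul]
      · rw [div_self hq1, Real.log_one, mul_zero]
    rw [h1, h2]
    norm_num
  · have hq : 0 < q := by
      rcases hq0.eq_or_lt with h | h
      · exact absurd (h0 h.symm) (by linarith)
      · exact h
    have hq1 : q < 1 := lt_of_lt_of_le hlt hp1
    -- F x = x log x - x log q + (1-x) log(1-x) - (1-x) log(1-q) - 2 (x-q)^2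
    -- G x = F' x
    have hGderiv : ∀ x ∈ Set.Ioo q 1, HasDerivAt
        (fun x => Real.log x - Real.log q - Real.log (1 - x) + Real.log (1 - q) - 4 * (x - q))
        (1 / x + 1 / (1 - x) - 4) x := by
      intro x hx
      have hx0 : 0 < x := hq.trans hx.1
      have h1x : 0 < 1 - x := by linarith [hx.2]
      have d1 : HasDerivAt (fun x : ℝ => Real.log x) x⁻¹ x := Real.hasDerivAt_log hx0.ne'
      have dlin : HasDerivAt (fun x : ℝ => 1 - x) (-1) x := (hasDerivAt_id x).const_sub 1
      have d2 : HasDerivAt (fun x : ℝ => Real.log (1 - x)) ((1 - x)⁻¹ * -1) x :=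
        (Real.hasDerivAt_log h1x.ne').comp x dlin
      have d3 : HasDerivAt (fun x : ℝ => 4 * (x - q)) (4 * 1) x :=
        ((hasDerivAt_id x).sub_const q).const_mul 4
      have h := (((d1.sub_const (Real.log q)).sub d2).add_const (Real.log (1 - q))).sub d3
      have he : x⁻¹ - (1 - x)⁻¹ * -1 - 4 * 1 = 1 / x + 1 / (1 - x) - 4 := by
        field_simp
        ring
      rw [he] at h
      exact h
    have hGcont : ContinuousOn
        (fun x => Real.log x - Real.log q - Real.log (1 - x) + Real.log (1 - q) - 4 * (x - q))
        (Set.Ico q 1) := by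
      have h1 : ContinuousOn (fun x : ℝ => Real.log x) (Set.Ico q 1) :=
        ContinuousOn.log continuousOn_id fun x hx => (hq.trans_le hx.1).ne'
      have h2 : ContinuousOn (fun x : ℝ => Real.log (1 - x)) (Set.Ico q 1) :=
        ContinuousOn.log (continuousOn_const.sub continuousOn_id)
          fun x hx => by
            have h2 : x < 1 := hx.2
            intro hc
            rw [sub_eq_zero] at hc
            exact absurd hc.symm (ne_of_lt h2)
      exact ((((h1.sub continuousOn_const).sub h2).add continuousOn_const).sub
        ((continuous_const.mul (continuous_id.sub continuous_const)).continuousOn))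
    have hGmono : MonotoneOn
        (fun x => Real.log x - Real.log q - Real.log (1 - x) + Real.log (1 - q) - 4 * (x - q))
        (Set.Ico q 1) := by
      apply monotoneOn_of_deriv_nonneg (convex_Ico q 1) hGcont
      · intro x hx
        rw [interior_Ico] at hx
        exact (hGderiv x hx).differentiableAt.differentiableWithinAt
      · intro x hx
        rw [interior_Ico] at hx
        rw [(hGderiv x hx).deriv]
        have hx0 : 0 < x := hq.trans hx.1
        have h1x : 0 < 1 - x := by linarith [hx.2]
        have : (4:ℝ) ≤ 1 / x + 1 / (1 - x) := by
          rw [div_add_div _ _ hx0.ne' h1x.ne', le_div_iff₀ (mul_pos hx0 h1x)]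
          nlinarith [sq_nonneg (2 * x - 1)]
        linarith
    have hG0 : ∀ x ∈ Set.Ioo q 1,
        0 ≤ Real.log x - Real.log q - Real.log (1 - x) + Real.log (1 - q) - 4 * (x - q) := by
      intro x hx
      have h4 : Real.log q - Real.log q - Real.log (1 - q) + Real.log (1 - q) - 4 * (q - q)
          ≤ Real.log x - Real.log q - Real.log (1 - x) + Real.log (1 - q) - 4 * (x - q) :=
        hGmono (Set.mem_Ico.mpr ⟨le_refl q, hq1⟩) (Set.mem_Ico.mpr ⟨hx.1.le, hx.2⟩) hx.1.le
      linarith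
    -- Now F
    have hFderiv : ∀ x ∈ Set.Ioo q 1, HasDerivAt
        (fun x => x * Real.log x - x * Real.log q + (1 - x) * Real.log (1 - x)
          - (1 - x) * Real.log (1 - q) - 2 * (x - q) ^ 2)
        (Real.log x - Real.log q - Real.log (1 - x) + Real.log (1 - q) - 4 * (x - q)) x := by
      intro x hx
      have hx0 : 0 < x := hq.trans hx.1
      have h1x : 0 < 1 - x := by linarith [hx.2]
      have d1 : HasDerivAt (fun x : ℝ => x * Real.log x) (Real.log x + 1) x :=
        Real.hasDerivAt_mul_log hx0.ne'
      have dlin : HasDerivAt (fun x : ℝ => 1 - x) (-1) x := (hasDerivAt_id x).const_sub 1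
      have d2 : HasDerivAt (fun x : ℝ => (1 - x) * Real.log (1 - x))
          ((Real.log (1 - x) + 1) * -1) x :=
        (Real.hasDerivAt_mul_log h1x.ne').comp x dlin
      have d3 : HasDerivAt (fun x : ℝ => x * Real.log q) (Real.log q) x :=
        hasDerivAt_mul_const _
      have d4 : HasDerivAt (fun x : ℝ => (1 - x) * Real.log (1 - q)) (-1 * Real.log (1 - q)) x :=
        dlin.mul_const _
      have d5 : HasDerivAt (fun x : ℝ => 2 * (x - q) ^ 2) (2 * (2 * (x - q) ^ 1 * 1)) x :=
        (((hasDerivAt_id x).sub_const q).pow 2).const_mul 2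
      have := (((d1.sub d3).add d2).sub d4).sub d5
      refine this.congr_deriv ?_
      ring
    have hFcont : ContinuousOn
        (fun x => x * Real.log x - x * Real.log q + (1 - x) * Real.log (1 - x)
          - (1 - x) * Real.log (1 - q) - 2 * (x - q) ^ 2) (Set.Icc q 1) := by
      have h1 : Continuous fun x : ℝ => (1 - x) * Real.log (1 - x) :=
        Real.continuous_mul_log.comp (continuous_const.sub continuous_id)
      exact ((((Real.continuous_mul_log.sub (continuous_id.mul continuous_const)).add h1).sub
        ((continuous_const.sub continuous_id).mul continuous_const)).sub
        (continuous_const.mul ((continuous_id.sub continuous_const).pow 2))).continuousOn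
    have hFmono : MonotoneOn
        (fun x => x * Real.log x - x * Real.log q + (1 - x) * Real.log (1 - x)
          - (1 - x) * Real.log (1 - q) - 2 * (x - q) ^ 2) (Set.Icc q 1) := by
      apply monotoneOn_of_deriv_nonneg (convex_Icc q 1) hFcont
      · intro x hx
        rw [interior_Icc] at hx
        exact (hFderiv x hx).differentiableAt.differentiableWithinAt
      · intro x hx
        rw [interior_Icc] at hx
        rw [(hFderiv x hx).deriv]
        exact hG0 x hx
    have hkey : q * Real.log q - q * Real.log q + (1 - q) * Real.log (1 - q)
        - (1 - q) * Real.log (1 - q) - 2 * (q - q) ^ 2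
        ≤ p * Real.log p - p * Real.log q + (1 - p) * Real.log (1 - p)
        - (1 - p) * Real.log (1 - q) - 2 * (p - q) ^ 2 :=
      hFmono (Set.mem_Icc.mpr ⟨le_refl q, hq1.le⟩) (Set.mem_Icc.mpr ⟨hqp, hp1⟩) hqp
    have hFq : q * Real.log q - q * Real.log q + (1 - q) * Real.log (1 - q)
        - (1 - q) * Real.log (1 - q) - 2 * (q - q) ^ 2 = 0 := by ring
    rw [hFq] at hkey
    -- convert goal
    have hp0 : 0 < p := hq.trans hlt
    rcases eq_or_lt_of_le hp1 with rfl | hplt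
    · rw [Real.log_div one_ne_zero hq.ne']
      rw [Real.log_one] at hkey ⊢
      norm_num at hkey ⊢
      linarith
    · have h1p : 0 < 1 - p := by linarith
      have h1q : 0 < 1 - q := by linarith
      rw [Real.log_div hp0.ne' hq.ne', Real.log_div h1p.ne' h1q.ne']
      nlinarith [hkey]

/-- Pinsker/Kullback inequality on a countable state space:
`2 d_TV(μ,ν)² ≤ d_I(μ,ν)`, where `d_I` is the relative entropy. -/
theorem pinsker_inequality (Ω : Type*) [Countable Ω]
    (μ ν : Ω → ℝ) (hμ0 : ∀ i, 0 ≤ μ i) (hν0 : ∀ i, 0 ≤ ν i)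
    (hμs : Summable μ) (hνs : Summable ν)
    (hμ1 : ∑' i, μ i = 1) (hν1 : ∑' i, ν i = 1)
    (hac : ∀ i, ν i = 0 → μ i = 0)
    (hIsum : Summable fun i => μ i * Real.log (μ i / ν i)) :
    2 * ((1 / 2) * ∑' i, |μ i - ν i|) ^ 2
      ≤ ∑' i, μ i * Real.log (μ i / ν i) := by
  classical
  set S : Set Ω := {i | ν i < μ i} with hS
  have hμS := hμs.indicator S
  have hμSc := hμs.indicator Sᶜ
  have hνS := hνs.indicator S
  have hνSc := hνs.indicator Sᶜ
  set p := ∑' i, S.indicator μ i with hp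
  set q := ∑' i, S.indicator ν i with hq
  set p' := ∑' i, Sᶜ.indicator μ i with hp'
  set q' := ∑' i, Sᶜ.indicator ν i with hq'
  have hpp' : p + p' = 1 := by
    rw [hp, hp', ← Summable.tsum_add hμS hμSc]
    rw [tsum_congr fun i => Set.indicator_self_add_compl_apply S μ i]
    exact hμ1
  have hqq' : q + q' = 1 := by
    rw [hq, hq', ← Summable.tsum_add hνS hνSc]
    rw [tsum_congr fun i => Set.indicator_self_add_compl_apply S ν i]
    exact hν1
  have habs : ∀ i, |μ i - ν i|
      = (S.indicator μ i - S.indicator ν i) + (Sᶜ.indicator ν i - Sᶜ.indicator μ i) := by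
    intro i
    by_cases hi : i ∈ S
    · have hlt : ν i < μ i := hi
      rw [Set.indicator_of_mem hi, Set.indicator_of_mem hi,
        Set.indicator_of_notMem (Set.notMem_compl_iff.mpr hi),
        Set.indicator_of_notMem (Set.notMem_compl_iff.mpr hi),
        abs_of_nonneg (by linarith)]
      ring
    · have hle : μ i ≤ ν i := le_of_not_gt hi
      rw [Set.indicator_of_notMem hi, Set.indicator_of_notMem hi,
        Set.indicator_of_mem (Set.mem_compl hi), Set.indicator_of_mem (Set.mem_compl hi),
        abs_of_nonpos (by linarith)]
      ring
  have hTV : ∑' i, |μ i - ν i| = (p - q) + (q' - p') := by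
    rw [tsum_congr habs, Summable.tsum_add (hμS.sub hνS) (hνSc.sub hμSc),
      Summable.tsum_sub hμS hνS, Summable.tsum_sub hνSc hμSc]
  have hq0 : 0 ≤ q := tsum_nonneg fun i => Set.indicator_nonneg (fun j _ => hν0 j) i
  have hqp : q ≤ p := by
    apply Summable.tsum_le_tsum _ hνS hμS
    intro i
    by_cases hi : i ∈ S
    · rw [Set.indicator_of_mem hi, Set.indicator_of_mem hi]
      exact le_of_lt hi
    · rw [Set.indicator_of_notMem hi, Set.indicator_of_notMem hi]
  have hp'0 : 0 ≤ p' := tsum_nonneg fun i => Set.indicator_nonneg (fun j _ => hμ0 j) i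
  have hp1 : p ≤ 1 := by linarith
  have h0 : q = 0 → p = 0 := by
    intro hq00
    have hzν : ∀ i, S.indicator ν i = 0 := fun i =>
      le_antisymm (by
        have := hνS.le_tsum i fun j _ => Set.indicator_nonneg (fun j _ => hν0 j) j
        rw [← hq, hq00] at this
        exact this) (Set.indicator_nonneg (fun j _ => hν0 j) i)
    have hzμ : ∀ i, S.indicator μ i = 0 := by
      intro i
      by_cases hi : i ∈ S
      · rw [Set.indicator_of_mem hi]
        apply hac
        have := hzν i; rwa [Set.indicator_of_mem hi] at this
      · exact Set.indicator_of_notMem hi _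
    rw [hp, tsum_congr hzμ, tsum_zero]
  have hKL : ∑' i, μ i * Real.log (μ i / ν i)
      = (∑' i, S.indicator (fun j => μ j * Real.log (μ j / ν j)) i)
        + ∑' i, Sᶜ.indicator (fun j => μ j * Real.log (μ j / ν j)) i := by
    rw [← Summable.tsum_add (hIsum.indicator S) (hIsum.indicator Sᶜ)]
    exact (tsum_congr fun i =>
      (Set.indicator_self_add_compl_apply S (fun j => μ j * Real.log (μ j / ν j)) i).symm)
  have h1 := pinsker_log_sum μ ν hμ0 hν0 hμs hνs hac hIsum S
  have h2 := pinsker_log_sum μ ν hμ0 hν0 hμs hνs hac hIsum Sᶜ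
  have h3 := pinsker_two_point hq0 hqp hp1 h0
  have hp'e : p' = 1 - p := by linarith
  have hq'e : q' = 1 - q := by linarith
  rw [← hp, ← hq] at h1
  rw [← hp', ← hq', hp'e, hq'e] at h2
  have hgoal : (1 / 2 : ℝ) * ∑' i, |μ i - ν i| = p - q := by
    rw [hTV, hp'e, hq'e]; ring
  rw [hgoal, hKL]
  linarith
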